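/- With the Markov chain of the previous construction started at x = (1, 0^n), for every t ≥ 1, d_tv(P^t(x,·), π) = (1/2)((m−2)/m)^{t−1} d_tv(μ₁, μ₂). -/

import Mathlib

open Finset

/-- The Markov chain on `[m] × {0,1}^n`: from `(X,Y)`, resample `Y ~ μ₁` if `X = 1`
(index `0`), `Y ~ μ₂` if `X = 2` (index `1`), keep `Y` otherwise; then `X` uniform. -/
noncomputable def mixChain (m n : ℕ) (μ₁ μ₂ : (Fin n → Bool) → ℝ) :
    Matrix (Fin m × (Fin n → Bool)) (Fin m × (Fin n → Bool)) ℝ :=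
  Matrix.of fun s s' =>
    (1 / (m : ℝ)) *
      (if (s.1 : ℕ) = 0 then μ₁ s'.2
       else if (s.1 : ℕ) = 1 then μ₂ s'.2
       else if s'.2 = s.2 then 1 else 0)

lemma sum_fin_three (m : ℕ) (hm : 3 ≤ m) (A B C : ℝ) :
    (∑ z : Fin m, (if (z : ℕ) = 0 then A else if (z : ℕ) = 1 then B else C))
      = A + B + ((m : ℝ) - 2) * C := by
  rw [Fin.sum_univ_eq_sum_range (fun i => if i = 0 then A else if i = 1 then B else C) m]
  rw [Finset.range_eq_Ico, ← Finset.sum_Ico_consecutive _ (by omega : 0 ≤ 2) (by omega : 2 ≤ m)]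
  have h1 : (∑ i ∈ Finset.Ico 0 2, (if i = 0 then A else if i = 1 then B else C)) = A + B := by
    rw [← Finset.range_eq_Ico]
    simp [Finset.sum_range_succ]
  have h2 : ∀ i ∈ Finset.Ico 2 m, (if i = 0 then A else if i = 1 then B else C) = C := by
    intro i hi
    have := (Finset.mem_Ico.mp hi).1
    rw [if_neg (by omega), if_neg (by omega)]
  rw [h1, Finset.sum_congr rfl h2, Finset.sum_const, Nat.card_Ico, nsmul_eq_mul,
    Nat.cast_sub (by omega : 2 ≤ m)]
  push_cast
  ring

lemma mixChain_pow (m n : ℕ) (hm : 3 ≤ m) (μ₁ μ₂ : (Fin n → Bool) → ℝ)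
    (hμ₁1 : ∑ y, μ₁ y = 1) (hμ₂1 : ∑ y, μ₂ y = 1) :
    ∀ t, 1 ≤ t → ∀ s : Fin m × (Fin n → Bool),
    (mixChain m n μ₁ μ₂ ^ t) (⟨0, by omega⟩, fun _ => false) s
      = (1 / (m : ℝ)) *
          ((1/2) * (1 + (((m : ℝ) - 2) / m) ^ (t - 1)) * μ₁ s.2
           + (1/2) * (1 - (((m : ℝ) - 2) / m) ^ (t - 1)) * μ₂ s.2) := by
  have hm0 : (m : ℝ) ≠ 0 := by positivity
  intro t ht
  induction t, ht using Nat.le_induction with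
  | base =>
    intro s
    rw [pow_one]
    simp only [mixChain, Matrix.of_apply]
    norm_num
  | succ t ht ih =>
    intro s
    rw [pow_succ, Matrix.mul_apply]
    have hterm : ∀ k : Fin m × (Fin n → Bool),
        (mixChain m n μ₁ μ₂ ^ t) (⟨0, by omega⟩, fun _ => false) k *
          (mixChain m n μ₁ μ₂) k s
        = ((1 / (m : ℝ)) *
            ((1/2) * (1 + (((m : ℝ) - 2) / m) ^ (t - 1)) * μ₁ k.2
             + (1/2) * (1 - (((m : ℝ) - 2) / m) ^ (t - 1)) * μ₂ k.2)) *
          ((1 / (m : ℝ)) *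
            (if (k.1 : ℕ) = 0 then μ₁ s.2
             else if (k.1 : ℕ) = 1 then μ₂ s.2
             else if s.2 = k.2 then 1 else 0)) := by
      intro k; rw [ih k]; rfl
    rw [Finset.sum_congr rfl (fun k _ => hterm k)]
    rw [Fintype.sum_prod_type]
    set q : ℝ := (((m : ℝ) - 2) / m) ^ (t - 1) with hq
    set g : (Fin n → Bool) → ℝ := fun y =>
      (1 / (m : ℝ)) * ((1/2) * (1 + q) * μ₁ y + (1/2) * (1 - q) * μ₂ y) with hg
    have hgsum : ∑ y, g y = (1 / (m : ℝ)) := by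
      simp only [hg]
      rw [← Finset.mul_sum, Finset.sum_add_distrib, ← Finset.mul_sum, ← Finset.mul_sum,
        hμ₁1, hμ₂1]
      ring
    have hinner : ∀ z : Fin m,
        (∑ y, g y * ((1 / (m : ℝ)) *
          (if (z : ℕ) = 0 then μ₁ s.2
           else if (z : ℕ) = 1 then μ₂ s.2
           else if s.2 = y then 1 else 0)))
        = (if (z : ℕ) = 0 then (1 / (m : ℝ)) * ((1 / (m : ℝ)) * μ₁ s.2)
           else if (z : ℕ) = 1 then (1 / (m : ℝ)) * ((1 / (m : ℝ)) * μ₂ s.2)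
           else (1 / (m : ℝ)) * g s.2) := by
      intro z
      by_cases h0 : (z : ℕ) = 0
      · simp only [h0]
        norm_num
        rw [← Finset.sum_mul, hgsum]; ring
      · by_cases h1 : (z : ℕ) = 1
        · simp only [h0, h1]
          norm_num
          rw [← Finset.sum_mul, hgsum]; ring
        · simp only [h0, h1, if_false]
          have hyy : ∀ y, g y * ((1 / (m : ℝ)) * (if s.2 = y then 1 else 0))
              = if s.2 = y then (1 / (m : ℝ)) * g y else 0 := by
            intro y
            by_cases h : s.2 = y
            · rw [if_pos h, if_pos h]; ring
            · rw [if_neg h, if_neg h]; ring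
          rw [Finset.sum_congr rfl (fun y _ => hyy y), Finset.sum_ite_eq]
          simp
    rw [Finset.sum_congr rfl (fun z _ => hinner z), sum_fin_three m hm]
    have hqpow : (((m : ℝ) - 2) / m) ^ (t + 1 - 1) = (((m : ℝ) - 2) / m) * q := by
      rw [hq, ← pow_succ', Nat.sub_add_cancel ht, Nat.add_sub_cancel]
    rw [hqpow]
    simp only [hg]
    field_simp
    ring

/-- Started at `x = (1, 0ⁿ)`, for every `t ≥ 1`,
`d_tv(P^t(x,·), π) = (1/2)((m−2)/m)^{t−1} d_tv(μ₁, μ₂)`. -/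
theorem stmt_8 (m n : ℕ) (hm : 3 ≤ m) (μ₁ μ₂ : (Fin n → Bool) → ℝ)
    (hμ₁0 : ∀ y, 0 ≤ μ₁ y) (hμ₁1 : ∑ y, μ₁ y = 1)
    (hμ₂0 : ∀ y, 0 ≤ μ₂ y) (hμ₂1 : ∑ y, μ₂ y = 1)
    (t : ℕ) (ht : 1 ≤ t) :
    (1/2) * ∑ s : Fin m × (Fin n → Bool),
        |(mixChain m n μ₁ μ₂ ^ t) (⟨0, by omega⟩, fun _ => false) s -
          (1 / (m : ℝ)) * ((1/2) * μ₁ s.2 + (1/2) * μ₂ s.2)|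
      = (1/2) * (((m : ℝ) - 2) / m)^(t-1) * ((1/2) * ∑ y, |μ₁ y - μ₂ y|) := by
  have hm0 : (m : ℝ) ≠ 0 := by positivity
  set q : ℝ := (((m : ℝ) - 2) / m) ^ (t - 1) with hq
  have hq0 : 0 ≤ q := by
    apply pow_nonneg
    apply div_nonneg
    · have : (3 : ℝ) ≤ m := by exact_mod_cast hm
      linarith
    · positivity
  have hmpos : (0 : ℝ) < m := by positivity
  have hterm : ∀ s : Fin m × (Fin n → Bool),
      |(mixChain m n μ₁ μ₂ ^ t) (⟨0, by omega⟩, fun _ => false) s -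
        (1 / (m : ℝ)) * ((1/2) * μ₁ s.2 + (1/2) * μ₂ s.2)|
      = (1 / (m : ℝ)) * (q / 2) * |μ₁ s.2 - μ₂ s.2| := by
    intro s
    rw [mixChain_pow m n hm μ₁ μ₂ hμ₁1 hμ₂1 t ht s]
    have : (1 / (m : ℝ)) *
          ((1/2) * (1 + q) * μ₁ s.2 + (1/2) * (1 - q) * μ₂ s.2) -
        (1 / (m : ℝ)) * ((1/2) * μ₁ s.2 + (1/2) * μ₂ s.2)
        = ((1 / (m : ℝ)) * (q / 2)) * (μ₁ s.2 - μ₂ s.2) := by ring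
    rw [this, abs_mul, abs_of_nonneg (by positivity)]
  rw [Finset.sum_congr rfl (fun s _ => hterm s), Fintype.sum_prod_type]
  simp only [← Finset.mul_sum]
  rw [Finset.sum_const, Finset.card_univ, Fintype.card_fin, nsmul_eq_mul]
  field_simp
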